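/- Let s ≥ 2 be an integer, let N ∈ ℕ, and let a, b be digit sequences such that: a N ≥ 1; for n > N, a n = s − 1 if n − N is odd and a n = 0 if n − N is even; b n = a n for n < N, b N = a N − 1; and for n > N, b n = 0 if n − N is odd and b n = s − 1 if n − N is even. Then a and b have the same nega-s-adic value, ∑_{n=0}^∞ (−1)^{n+1} a n / s^{n+1} = ∑_{n=0}^∞ (−1)^{n+1} b n / s^{n+1}, but different s-adic values: ∑_{n=0}^∞ a n / s^{n+1} ≠ ∑_{n=0}^∞ b n / s^{n+1}. (Paper's Lemma 1 for the function f₊⁻¹: the two nega-s-adic representations of a nega-s-adic rational number are sent by f₊⁻¹ to different values.) -/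

import Mathlib

lemma stmt2_sum_aux (s : ℕ) (hs : 2 ≤ s) (u : ℕ → ℝ)
    (hu : ∀ n, ‖u n‖ ≤ ((1:ℝ)/s) ^ n) : Summable u := by
  have hs0 : (0:ℝ) < s := by
    have : (2:ℝ) ≤ s := by exact_mod_cast hs
    linarith
  apply Summable.of_norm_bounded ?_ hu
  apply summable_geometric_of_lt_one (by positivity)
  rw [div_lt_one hs0]
  have : (2:ℝ) ≤ s := by exact_mod_cast hs
  linarith

lemma stmt2_digit_sum (s : ℕ) (hs : 2 ≤ s) (c : ℕ → ℕ) (hc : ∀ n, c n ≤ s - 1)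
    (e : ℕ → ℝ) (he : ∀ n, ‖e n‖ = 1) :
    Summable (fun n : ℕ => e n * (c n : ℝ) / (s : ℝ) ^ (n + 1)) := by
  have hs0 : (0:ℝ) < s := by
    have : (2:ℝ) ≤ s := by exact_mod_cast hs
    linarith
  apply stmt2_sum_aux s hs
  intro n
  have h1 : (c n : ℝ) ≤ (s:ℝ) - 1 := by
    have := hc n
    have h2 : (c n : ℝ) ≤ ((s - 1 : ℕ) : ℝ) := by exact_mod_cast this
    rwa [Nat.cast_sub (by omega), Nat.cast_one] at h2
  have hpow : (0:ℝ) < (s:ℝ) ^ (n+1) := by positivity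
  rw [norm_div, norm_mul, he n, one_mul]
  rw [Real.norm_natCast, Real.norm_of_nonneg (le_of_lt hpow)]
  rw [div_pow, one_pow, div_le_div_iff₀ hpow (by positivity), one_mul]
  have : (c n : ℝ) * (s:ℝ)^n ≤ ((s:ℝ) - 1) * (s:ℝ)^n := by
    apply mul_le_mul_of_nonneg_right h1 (by positivity)
  calc (c n : ℝ) * (s:ℝ)^n ≤ ((s:ℝ)-1) * (s:ℝ)^n := this
    _ ≤ (s:ℝ) * (s:ℝ)^n := by nlinarith [pow_pos hs0 n]
    _ = (s:ℝ)^(n+1) := by ring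

/-- Paper's Lemma 1 for the function `f₊⁻¹`: the two nega-s-adic representations
`a` and `b` of a nega-s-adic rational number have the same nega-s-adic value but
different s-adic values. -/
theorem stmt_2 (s : ℕ) (hs : 2 ≤ s) (N : ℕ) (a b : ℕ → ℕ)
    (ha : ∀ n, a n ≤ s - 1) (hb : ∀ n, b n ≤ s - 1)
    (haN : 1 ≤ a N)
    (haTailOdd : ∀ n > N, Odd (n - N) → a n = s - 1)
    (haTailEven : ∀ n > N, Even (n - N) → a n = 0)
    (hbBefore : ∀ n < N, b n = a n) (hbN : b N = a N - 1)
    (hbTailOdd : ∀ n > N, Odd (n - N) → b n = 0)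
    (hbTailEven : ∀ n > N, Even (n - N) → b n = s - 1) :
    (∑' n : ℕ, (-1 : ℝ) ^ (n + 1) * (a n : ℝ) / (s : ℝ) ^ (n + 1)) =
      (∑' n : ℕ, (-1 : ℝ) ^ (n + 1) * (b n : ℝ) / (s : ℝ) ^ (n + 1)) ∧
    (∑' n : ℕ, (a n : ℝ) / (s : ℝ) ^ (n + 1)) ≠
      (∑' n : ℕ, (b n : ℝ) / (s : ℝ) ^ (n + 1)) := by
  have hs2 : (2:ℝ) ≤ s := by exact_mod_cast hs
  have hs0 : (0:ℝ) < s := by linarith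
  have hs1 : (1:ℝ) < s := by linarith
  have hsne : (s:ℝ) ≠ 0 := ne_of_gt hs0
  have hcast : ((s-1:ℕ):ℝ) = (s:ℝ) - 1 := by
    rw [Nat.cast_sub (by omega), Nat.cast_one]
  -- summability
  have hfa : Summable (fun n : ℕ => (-1:ℝ)^(n+1) * (a n : ℝ) / (s:ℝ)^(n+1)) :=
    stmt2_digit_sum s hs a ha _ (fun n => by simp)
  have hfb : Summable (fun n : ℕ => (-1:ℝ)^(n+1) * (b n : ℝ) / (s:ℝ)^(n+1)) :=
    stmt2_digit_sum s hs b hb _ (fun n => by simp)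
  have hga : Summable (fun n : ℕ => (a n : ℝ) / (s:ℝ)^(n+1)) := by
    simpa using stmt2_digit_sum s hs a ha (fun _ => 1) (by simp)
  have hgb : Summable (fun n : ℕ => (b n : ℝ) / (s:ℝ)^(n+1)) := by
    simpa using stmt2_digit_sum s hs b hb (fun _ => 1) (by simp)
  -- geometric sums
  have hr1 : ((1:ℝ)/s) < 1 := by rw [div_lt_one hs0]; linarith
  have hgeo1 : ∑' i : ℕ, ((1:ℝ)/s)^i = ((1:ℝ) - 1/(s:ℝ))⁻¹ :=
    tsum_geometric_of_lt_one (by positivity) hr1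
  have hgeo2 : ∑' i : ℕ, (-(1:ℝ)/s)^i = ((1:ℝ) - (-1/(s:ℝ)))⁻¹ := by
    apply tsum_geometric_of_norm_lt_one
    rw [norm_div, Real.norm_of_nonneg (le_of_lt hs0)]
    simpa using hr1
  constructor
  · -- nega-s-adic values agree
    rw [← sub_eq_zero, ← (Summable.tsum_sub hfa hfb)]
    set D : ℕ → ℝ := fun n =>
      (-1:ℝ)^(n+1) * (a n : ℝ) / (s:ℝ)^(n+1) - (-1:ℝ)^(n+1) * (b n : ℝ) / (s:ℝ)^(n+1) with hDdef
    have hD : Summable D := hfa.sub hfb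
    rw [← Summable.sum_add_tsum_nat_add N hD]
    have h1 : ∑ i ∈ Finset.range N, D i = 0 := by
      apply Finset.sum_eq_zero
      intro i hi
      simp [hDdef, hbBefore i (Finset.mem_range.mp hi)]
    have hDsh : Summable (fun i => D (i + N)) := (summable_nat_add_iff N).mpr hD
    rw [h1, Summable.tsum_eq_zero_add hDsh]
    have hDN : D (0 + N) = (-1:ℝ)^(N+1) / (s:ℝ)^(N+1) := by
      have hab : (a N : ℝ) - (b N : ℝ) = 1 := by
        rw [hbN, Nat.cast_sub haN, Nat.cast_one]; ring
      simp only [hDdef, Nat.zero_add]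
      rw [div_sub_div_same, ← mul_sub, hab, mul_one]
    have hDt : ∀ i : ℕ, D (i + 1 + N) =
        ((-1:ℝ)^N * ((s:ℝ)-1) / (s:ℝ)^(N+2)) * ((1:ℝ)/s)^i := by
      intro i
      have hgt : i + 1 + N > N := by omega
      have hnN : (i + 1 + N) - N = i + 1 := by omega
      have hpows : (s:ℝ)^(i+1+N+1) = (s:ℝ)^(N+2) * (s:ℝ)^i := by
        rw [← pow_add]; ring_nf
      have key : D (i + 1 + N) = (-1:ℝ)^N * ((s:ℝ)-1) / (s:ℝ)^(i+1+N+1) := by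
        rcases Nat.even_or_odd i with hi | hi
        · have hao : a (i+1+N) = s - 1 := haTailOdd _ hgt (by rw [hnN]; exact hi.add_one)
          have hbo : b (i+1+N) = 0 := hbTailOdd _ hgt (by rw [hnN]; exact hi.add_one)
          have he2 : Even (i+2) := by rcases hi with ⟨k, hk⟩; exact ⟨k+1, by omega⟩
          have hpow1 : (-1:ℝ)^(i+1+N+1) = (-1:ℝ)^N := by
            rw [show i+1+N+1 = N + (i+2) by ring, pow_add, Even.neg_one_pow he2, mul_one]
          simp only [hDdef, hao, hbo, hcast, Nat.cast_zero, hpow1]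
          ring
        · have hao : a (i+1+N) = 0 := haTailEven _ hgt (by rw [hnN]; exact hi.add_one)
          have hbo : b (i+1+N) = s - 1 := hbTailEven _ hgt (by rw [hnN]; exact hi.add_one)
          have ho2 : Odd (i+2) := by rcases hi with ⟨k, hk⟩; exact ⟨k+1, by omega⟩
          have hpow1 : (-1:ℝ)^(i+1+N+1) = -(-1:ℝ)^N := by
            rw [show i+1+N+1 = N + (i+2) by ring, pow_add, Odd.neg_one_pow ho2]
            ring
          simp only [hDdef, hao, hbo, hcast, Nat.cast_zero, hpow1]
          ring
      rw [key, hpows, div_pow, one_pow]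
      field_simp
    rw [tsum_congr hDt, tsum_mul_left, hgeo1, hDN]
    have hs1' : (s:ℝ) - 1 ≠ 0 := by
      have : (0:ℝ) < (s:ℝ) - 1 := by linarith
      exact ne_of_gt this
    have hinv : ((1:ℝ) - 1/(s:ℝ))⁻¹ = (s:ℝ)/((s:ℝ)-1) := by
      have h' : (1:ℝ) - 1/(s:ℝ) = ((s:ℝ)-1)/(s:ℝ) := by field_simp
      rw [h', inv_div]
    rw [hinv, zero_add, pow_succ]
    field_simp
    ring
  · -- s-adic values differ
    apply sub_ne_zero.mp
    rw [← (Summable.tsum_sub hga hgb)]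
    set E : ℕ → ℝ := fun n =>
      (a n : ℝ) / (s:ℝ)^(n+1) - (b n : ℝ) / (s:ℝ)^(n+1) with hEdef
    have hE : Summable E := hga.sub hgb
    rw [← Summable.sum_add_tsum_nat_add N hE]
    have h1 : ∑ i ∈ Finset.range N, E i = 0 := by
      apply Finset.sum_eq_zero
      intro i hi
      simp [hEdef, hbBefore i (Finset.mem_range.mp hi)]
    have hEsh : Summable (fun i => E (i + N)) := (summable_nat_add_iff N).mpr hE
    rw [h1, Summable.tsum_eq_zero_add hEsh]
    have hEN : E (0 + N) = 1 / (s:ℝ)^(N+1) := by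
      have hab : (a N : ℝ) - (b N : ℝ) = 1 := by
        rw [hbN, Nat.cast_sub haN, Nat.cast_one]; ring
      simp only [hEdef, Nat.zero_add]
      rw [div_sub_div_same, hab]
    have hEt : ∀ i : ℕ, E (i + 1 + N) =
        (((s:ℝ)-1) / (s:ℝ)^(N+2)) * (-(1:ℝ)/s)^i := by
      intro i
      have hgt : i + 1 + N > N := by omega
      have hnN : (i + 1 + N) - N = i + 1 := by omega
      have hpows : (s:ℝ)^(i+1+N+1) = (s:ℝ)^(N+2) * (s:ℝ)^i := by
        rw [← pow_add]; ring_nf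
      have hneg : (-(1:ℝ)/s)^i = (-1:ℝ)^i / (s:ℝ)^i := by
        rw [div_pow]
      rcases Nat.even_or_odd i with hi | hi
      · have hao : a (i+1+N) = s - 1 := haTailOdd _ hgt (by rw [hnN]; exact hi.add_one)
        have hbo : b (i+1+N) = 0 := hbTailOdd _ hgt (by rw [hnN]; exact hi.add_one)
        have hpow1 : (-1:ℝ)^i = 1 := Even.neg_one_pow hi
        simp only [hEdef, hao, hbo, hcast, Nat.cast_zero, hneg, hpow1, hpows]
        field_simp
        ring
      · have hao : a (i+1+N) = 0 := haTailEven _ hgt (by rw [hnN]; exact hi.add_one)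
        have hbo : b (i+1+N) = s - 1 := hbTailEven _ hgt (by rw [hnN]; exact hi.add_one)
        have hpow1 : (-1:ℝ)^i = -1 := Odd.neg_one_pow hi
        simp only [hEdef, hao, hbo, hcast, Nat.cast_zero, hneg, hpow1, hpows]
        field_simp
        ring
    rw [tsum_congr hEt, tsum_mul_left, hgeo2, hEN]
    have h3 : (0:ℝ) < (1:ℝ) - (-1/(s:ℝ)) := by
      rw [show (-1:ℝ)/(s:ℝ) = -(1/(s:ℝ)) by ring, sub_neg_eq_add]
      positivity
    have h4 : (0:ℝ) < (s:ℝ) - 1 := by linarith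
    have : (0:ℝ) < 0 + (1 / (s:ℝ)^(N+1) + ((s:ℝ)-1)/(s:ℝ)^(N+2) * ((1:ℝ) - (-1/(s:ℝ)))⁻¹) := by
      positivity
    exact ne_of_gt this
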